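/- arXiv:0810.4707 — 6 statements merged into one kernel-verified Lean document; each statement's English description precedes it below -/
import Mathlib

section
/- Let A be a ring with anti-involution in which there is a central λ with λ + λ̄ = 1. Identify E with its dual via the nondegenerate hermitian form φ, write ψ = φ⁻¹φ₀ (so ψ* = 1 − ψ), and describe O^él(E) as pairs (f, u) with f unitary and f⁻¹ψf = ψ + u − u*. Then the map s : O^min(E) → O^él(E) defined by s(g) = (g, λ(g⁻¹ψg − ψ)) is a group homomorphism splitting the extension 1 → S(E) → O^él(E) → O^min(E) → 1, so O^él(E) is isomorphic to the semidirect product S(E) ⋊ O^min(E), where O^min(E) acts on the self-adjoint endomorphisms S(E) by (u, g) ↦ g⁻¹ u g. -/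
/-!
STATEMENT 4: Suppose `1` is split in `A`.  After identifying `E` with its dual via the
nondegenerate hermitian form `φ` (so that transposition becomes the adjoint `star` on the
endomorphism ring `R = End(E)`, and `λ ∈ A` acts as a central element `ℓ` of `R` with
`ℓ + star ℓ = 1`), write `ψ = φ⁻¹φ₀` with `star ψ = 1 − ψ`.  `O^él(E)` consists of pairs
`(f, u)` with `f` unitary and `f⁻¹ ψ f = ψ + u − star u`, with law
`(f,u)·(g,v) = (fg, v + g⁻¹ u g)`; `O^min(E)` of unitary `g` admitting some such `u`.
Then `s(g) = (g, ℓ(g⁻¹ψg − ψ))` is a group-theoretic section of `(f,u) ↦ f`, exhibiting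
`O^él(E)` as the semidirect product `S(E) ⋊ O^min(E)` with action `(u, g) ↦ g⁻¹ u g`,
where `S(E)` is the additive group of self-adjoint endomorphisms.
-/

theorem oel_splits_as_semidirect_product
    (R : Type*) [Ring R] [StarRing R]
    (ℓ : R) (hcentral : ∀ r : R, ℓ * r = r * ℓ) (hsplit : ℓ + star ℓ = 1)
    (ψ : R) (hψ : star ψ = 1 - ψ) :
    -- abbreviate the `u`-component of the section: `sγ g = ℓ (g⁻¹ ψ g − ψ)`
    let sγ : Rˣ → R := fun g => ℓ * ((↑g⁻¹ : R) * ψ * g - ψ)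
    -- (1) `s` is well defined: for `g ∈ O^min(E)`, the pair `(g, sγ g)` lies in `O^él(E)`
    (∀ g : Rˣ, star (g : R) = (↑g⁻¹ : R) →
      (∃ u : R, (↑g⁻¹ : R) * ψ * g = ψ + u - star u) →
      (↑g⁻¹ : R) * ψ * g = ψ + sγ g - star (sγ g)) ∧
    -- (2) `s` is multiplicative for the law `(f,u)·(g,v) = (fg, v + g⁻¹ u g)`
    (∀ g₁ g₂ : Rˣ, star (g₁ : R) = (↑g₁⁻¹ : R) → star (g₂ : R) = (↑g₂⁻¹ : R) →
      sγ (g₁ * g₂) = sγ g₂ + (↑g₂⁻¹ : R) * sγ g₁ * g₂) ∧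
    -- (3) semidirect-product decomposition: every element `(f, v)` of `O^él(E)` is uniquely
    --     `(1, u)·s(f)` with `u` self-adjoint, i.e. `v = sγ f + f⁻¹ u f` for a unique
    --     self-adjoint `u ∈ S(E)`
    (∀ (f : Rˣ) (v : R), star (f : R) = (↑f⁻¹ : R) →
      (↑f⁻¹ : R) * ψ * f = ψ + v - star v →
      ∃! u : R, star u = u ∧ v = sγ f + (↑f⁻¹ : R) * u * f) := by
  intro sγ
  have hl : ∀ a b c : R, a * (ℓ * b) * c = ℓ * (a * b * c) := fun a b c => by
    rw [← mul_assoc, ← hcentral, mul_assoc, mul_assoc, mul_assoc]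
  have hsℓ : ∀ r : R, star ℓ * r = r * star ℓ := fun r => by
    have := congrArg star (hcentral (star r))
    simpa [star_mul] using this.symm
  -- key: the defining identity of O^él holds for (g, sγ g) whenever g is unitary
  have hkey : ∀ g : Rˣ, star (g : R) = (↑g⁻¹ : R) →
      (↑g⁻¹ : R) * ψ * g = ψ + sγ g - star (sγ g) := by
    intro g hg
    have hg' : star ((↑g⁻¹ : R)) = (g : R) := by rw [← hg, star_star]
    have hD : star ((↑g⁻¹ : R) * ψ * g - ψ) = ψ - (↑g⁻¹ : R) * ψ * g := by
      rw [star_sub, star_mul, star_mul, hg, hg', hψ]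
      rw [show (↑g⁻¹ : R) * ((1 - ψ) * ↑g) = 1 - (↑g⁻¹ : R) * ψ * ↑g from by
        rw [sub_mul, one_mul, mul_sub, Units.inv_mul, ← mul_assoc]]
      abel
    show (↑g⁻¹ : R) * ψ * g = ψ + ℓ * ((↑g⁻¹ : R) * ψ * g - ψ)
        - star (ℓ * ((↑g⁻¹ : R) * ψ * g - ψ))
    rw [star_mul, hD, ← hsℓ]
    rw [show ψ + ℓ * ((↑g⁻¹ : R) * ψ * ↑g - ψ) - star ℓ * (ψ - (↑g⁻¹ : R) * ψ * ↑g)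
        = ψ + (ℓ + star ℓ) * ((↑g⁻¹ : R) * ψ * ↑g - ψ) from by noncomm_ring]
    rw [hsplit, one_mul]
    abel
  refine ⟨fun g hg _ => hkey g hg, ?_, ?_⟩
  · intro g₁ g₂ _ _
    show ℓ * ((↑(g₁ * g₂)⁻¹ : R) * ψ * ↑(g₁ * g₂) - ψ)
        = ℓ * ((↑g₂⁻¹ : R) * ψ * g₂ - ψ)
          + (↑g₂⁻¹ : R) * (ℓ * ((↑g₁⁻¹ : R) * ψ * g₁ - ψ)) * g₂
    rw [hl, mul_inv_rev, Units.val_mul, Units.val_mul, ← mul_add]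
    congr 1
    noncomm_ring
  · intro f v hf hv
    have hf' : star ((↑f⁻¹ : R)) = (f : R) := by rw [← hf, star_star]
    have hkf := hkey f hf
    have hvs : v - star v = sγ f - star (sγ f) := by
      have h2 : ψ + (v - star v) = ψ + (sγ f - star (sγ f)) := by
        rw [← add_sub_assoc, hv.symm.trans hkf, add_sub_assoc]
      exact add_left_cancel h2
    have h3 : v - sγ f = star v - star (sγ f) :=
      sub_eq_sub_iff_sub_eq_sub.mp hvs
    refine ⟨(f : R) * (v - sγ f) * (↑f⁻¹ : R), ⟨?_, ?_⟩, ?_⟩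
    · rw [star_mul, star_mul, hf, hf', star_sub, ← h3, mul_assoc]
    · have hc : (↑f⁻¹ : R) * ((f : R) * (v - sγ f) * (↑f⁻¹ : R)) * f
          = v - sγ f := by
        simp [mul_assoc]
      rw [hc]
      abel
    · intro u' ⟨_, hu'⟩
      have h4 : (↑f⁻¹ : R) * u' * f = v - sγ f := by
        rw [hu']
        abel
      rw [← h4]
      simp [mul_assoc]
end

section
/- Let A be a ring with anti-involution in which there exists a central λ with λ + λ̄ = 1. Let E be an A-module with a hermitian identification E ≅ E*, and let ν be a nilpotent self-adjoint endomorphism of E. Then the element α = 1 + ν t of End(E)[t] can be written as α = γ(t)*·γ(t), where γ(t) is a polynomial in t with coefficients in the subring of End(E) generated by λ and ν, and the involution on End(E)[t] fixes t. -/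
/-!
STATEMENT 10: Let `A` be a ring with anti-involution containing a central `λ` with
`λ + λ̄ = 1`, and let `E` be identified with its dual via a hermitian form, so that the
endomorphism ring `R = End(E)` carries the adjoint anti-involution `star` and `λ` acts as
a central element `ℓ` of `R` with `ℓ + star ℓ = 1`.  If `ν` is a nilpotent self-adjoint
endomorphism, then `α = 1 + ν t ∈ R[t]` can be written `α = γ(t)* γ(t)` where `γ(t)` is a
polynomial in `t` with coefficients in the subring of `R` generated by `ℓ` and `ν`, and
the involution on `R[t]` is coefficientwise (`t̄ = t`).
-/

open Polynomial

variable (R : Type*) [Ring R] [StarRing R]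

/-- The coefficientwise extension of the adjoint involution to `R[t]`, with `t̄ = t`:
`(Σ aₙ tⁿ)* = Σ aₙ* tⁿ`. -/
noncomputable def starPoly (p : R[X]) : R[X] :=
  p.sum fun n a => C (star a) * X ^ n

lemma starPoly_coeff (p : R[X]) (i : ℕ) : (starPoly R p).coeff i = star (p.coeff i) := by
  rw [starPoly, Polynomial.sum, finset_sum_coeff]
  simp only [coeff_C_mul, coeff_X_pow]
  rw [Finset.sum_eq_single i]
  · simp
  · intro b _ hb; rw [if_neg (Ne.symm hb), mul_zero]
  · intro h; simp [Polynomial.notMem_support_iff.mp h]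

-- the key commutative lemma
lemma key {T : Type*} [CommRing T] (σ : T →+* T) (hσ : ∀ x, σ (σ x) = x)
    (ℓ u : T) (hs : ℓ + σ ℓ = 1) (hu : σ u = u) (k : ℕ) (hk : u ^ k = 0) :
    ∃ γ : T[X], (γ.map σ) * γ = 1 + C u * X := by
  set z : T[X] := C u * X with hz
  have hmapz : z.map σ = z := by simp [hz, hu]
  have hmm : ∀ p : T[X], (p.map σ).map σ = p := by
    intro p
    rw [map_map]
    have : σ.comp σ = RingHom.id T := by ext x; simp [hσ]
    rw [this, map_id]
  have aux : ∀ n : ℕ, ∃ γ r : T[X], (γ.map σ) * γ = 1 + z + z ^ (n + 1) * r := by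
    intro n
    induction n with
    | zero => exact ⟨1, -1, by simp⟩
    | succ n ih =>
      obtain ⟨γ, r, h⟩ := ih
      have hzr : z ^ (n + 1) * (r.map σ) = z ^ (n + 1) * r := by
        have h2 : ((γ.map σ) * γ).map σ = (γ.map σ) * γ := by
          rw [Polynomial.map_mul, hmm]; ring
        rw [h] at h2
        have h3 : (1 + z + z ^ (n+1) * r).map σ = 1 + z + z ^ (n+1) * (r.map σ) := by
          simp [Polynomial.map_add, Polynomial.map_mul, Polynomial.map_pow, hmapz]
        rw [h3] at h2
        exact add_left_cancel h2
      set s : T[X] := C ℓ * r + C (σ ℓ) * (r.map σ) with hsdef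
      have hss : s.map σ = s := by
        rw [hsdef]
        simp only [Polynomial.map_add, Polynomial.map_mul, map_C, hmm, hσ]
        ring
      have hzs : z ^ (n + 1) * s = z ^ (n + 1) * r := by
        rw [hsdef]
        have : z ^ (n+1) * (C ℓ * r + C (σ ℓ) * (r.map σ))
            = C ℓ * (z ^ (n+1) * r) + C (σ ℓ) * (z ^ (n+1) * (r.map σ)) := by ring
        rw [this, hzr]
        have : C ℓ * (z ^ (n+1) * r) + C (σ ℓ) * (z ^ (n+1) * r)
            = C (ℓ + σ ℓ) * (z ^ (n+1) * r) := by rw [map_add]; ring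
        rw [this, hs, map_one, one_mul]
      refine ⟨(1 - C ℓ * s * z ^ (n + 1)) * γ,
        -s + (C ℓ * C (σ ℓ) - 1) * s ^ 2 * z ^ n + C ℓ * C (σ ℓ) * s ^ 2 * z ^ (n + 1)
          + C ℓ * C (σ ℓ) * s ^ 3 * z ^ (2 * n + 1), ?_⟩
      have hmapfactor : ((1 - C ℓ * s * z ^ (n + 1)) * γ).map σ
          = (1 - C (σ ℓ) * s * z ^ (n + 1)) * γ.map σ := by
        simp [Polynomial.map_mul, Polynomial.map_sub, Polynomial.map_pow, hmapz, hss]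
      rw [hmapfactor]
      have hL : C (σ ℓ) = 1 - C ℓ := by
        have : σ ℓ = 1 - ℓ := by linear_combination hs
        rw [this, map_sub, map_one]
      calc (1 - C (σ ℓ) * s * z ^ (n + 1)) * Polynomial.map σ γ * ((1 - C ℓ * s * z ^ (n + 1)) * γ)
          = (1 - C (σ ℓ) * s * z ^ (n + 1)) * (1 - C ℓ * s * z ^ (n + 1)) * (Polynomial.map σ γ * γ) := by ring
        _ = (1 - C (σ ℓ) * s * z ^ (n + 1)) * (1 - C ℓ * s * z ^ (n + 1)) * (1 + z + z ^ (n+1) * s) := by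
            rw [h, ← hzs]
        _ = 1 + z + z ^ (n + 1 + 1) * (-s + (C ℓ * C (σ ℓ) - 1) * s ^ 2 * z ^ n + C ℓ * C (σ ℓ) * s ^ 2 * z ^ (n + 1)
          + C ℓ * C (σ ℓ) * s ^ 3 * z ^ (2 * n + 1)) := by rw [hL]; ring
  obtain ⟨γ, r, h⟩ := aux k
  refine ⟨γ, ?_⟩
  rw [h]
  have : z ^ (k + 1) = 0 := by
    rw [hz, mul_pow, ← map_pow, pow_succ, hk, zero_mul, map_zero, zero_mul]
  rw [this, zero_mul, add_zero]

theorem one_add_nilpotent_selfadjoint_factors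
    (ℓ : R) (hcentral : ∀ r : R, ℓ * r = r * ℓ) (hsplit : ℓ + star ℓ = 1)
    (ν : R) (hν : star ν = ν) (hnil : IsNilpotent ν) :
    ∃ γ : R[X],
      (∀ i, γ.coeff i ∈ Subring.closure ({ℓ, ν} : Set R)) ∧
      starPoly R γ * γ = 1 + C ν * X := by
  set S : Subring R := Subring.closure ({ℓ, ν} : Set R) with hS
  have hℓS : ℓ ∈ S := Subring.subset_closure (by simp)
  have hνS : ν ∈ S := Subring.subset_closure (by simp)
  have hstarS : ∀ x ∈ S, star x ∈ S := by
    intro x hx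
    induction hx using Subring.closure_induction with
    | mem x hx =>
      rcases hx with h | h
      · subst h
        have : star x = 1 - x := eq_sub_of_add_eq' hsplit
        rw [this]; exact sub_mem (one_mem S) hℓS
      · simp at h; subst h; rw [hν]; exact hνS
    | zero => rw [star_zero]; exact zero_mem S
    | one => rw [star_one]; exact one_mem S
    | add x y hx hy ihx ihy => rw [star_add]; exact add_mem ihx ihy
    | neg x hx ihx => rw [star_neg]; exact neg_mem ihx
    | mul x y hx hy ihx ihy => rw [star_mul]; exact mul_mem ihy ihx
  letI : CommRing S := Subring.closureCommRingOfComm (by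
    intro x hx y hy
    rcases hx with h | h <;> rcases hy with h' | h' <;>
      simp -failIfUnchanged only [Set.mem_singleton_iff] at * <;> subst h <;> subst h' <;>
      first | rfl | exact hcentral _ | exact (hcentral _).symm)
  have hcomm : ∀ x y : S, (x : R) * y = (y : R) * x := fun x y => by
    have h := Subtype.ext_iff.mp (mul_comm x y)
    simpa using h
  -- the restricted star as a ring hom on S
  set σ : S →+* S :=
    { toFun := fun x => ⟨star (x : R), hstarS _ x.2⟩
      map_one' := by ext; simp
      map_mul' := by
        intro a b; ext
        simp only [Subring.coe_mul]
        rw [star_mul]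
        exact hcomm ⟨star (b:R), hstarS _ b.2⟩ ⟨star (a:R), hstarS _ a.2⟩
      map_zero' := by ext; simp
      map_add' := by intro a b; ext; simp } with hσdef
  have hσ2 : ∀ x : S, σ (σ x) = x := by intro x; ext; simp [hσdef]
  set ℓ' : S := ⟨ℓ, hℓS⟩
  set u : S := ⟨ν, hνS⟩
  have hs' : ℓ' + σ ℓ' = 1 := by ext; simpa [hσdef] using hsplit
  have hu' : σ u = u := by ext; simpa [hσdef] using hν
  obtain ⟨k, hk⟩ := hnil
  have hk' : u ^ k = 0 := by ext; simpa using hk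
  obtain ⟨q, hq⟩ := key σ hσ2 ℓ' u hs' hu' k hk'
  refine ⟨q.map S.subtype, fun i => by simp [Polynomial.coeff_map], ?_⟩
  have hstarmap : starPoly R (q.map S.subtype) = (q.map σ).map S.subtype := by
    ext i
    rw [starPoly_coeff, Polynomial.coeff_map, Polynomial.coeff_map, Polynomial.coeff_map]
    simp [hσdef]
  rw [hstarmap, ← Polynomial.map_mul, hq]
  simp [Polynomial.map_add, Polynomial.map_mul]
  rfl
end

section
/- Let A be a ring with anti-involution and I a nilpotent two-sided ideal stable under the involution. Then every nondegenerate even ε-hermitian form on a f.g. projective (A/I)-module lifts: if E is a f.g. projective A-module and φ : E/IE → (E/IE)* is an isomorphism of the form φ₀ + ε ᵗφ₀, then choosing any lift ψ₀ : E → E* of φ₀, the morphism ψ = ψ₀ + ε ᵗψ₀ is a nondegenerate even ε-hermitian form on E reducing to φ modulo I. -/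
/-!
STATEMENT 12: Let `A` be a ring with anti-involution and `I` a nilpotent two-sided ideal
stable under the involution (right ideals of `A` being left ideals of `Aᵐᵒᵖ`).  Let `E` be
a f.g. projective right `A`-module, `ψ₀ : E → E*` any lift of `φ₀`, and
`ψ = ψ₀ + ε ᵗψ₀` the associated even `ε`-hermitian form.  If `ψ` reduces modulo `I` to the
nondegenerate form `φ = φ₀ + ε ᵗφ₀` on `E/IE` — i.e. the induced map
`E/IE → E*/IE*` is bijective — then `ψ` itself is nondegenerate (bijective).
-/

open MulOpposite

variable (A : Type*) [Ring A] [StarRing A]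

/-- The conjugate-semilinear dual of a right `A`-module `E` (right modules being
`Aᵐᵒᵖ`-modules): additive maps `f : E → A` with `f (x·a) = star a * f x`, with right
`A`-module structure `(f·a) x = f x * a`. -/
def sdual (E : Type*) [AddCommGroup E] [Module Aᵐᵒᵖ E] : Submodule Aᵐᵒᵖ (E → A) where
  carrier := {f | (∀ x y, f (x + y) = f x + f y) ∧ ∀ (a : A) (x : E), f (op a • x) = star a * f x}
  add_mem' := by
    intro f g hf hg
    refine ⟨fun x y => ?_, fun a x => ?_⟩
    · simp only [Pi.add_apply, hf.1 x y, hg.1 x y]; abel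
    · simp only [Pi.add_apply, hf.2 a x, hg.2 a x, mul_add]
  zero_mem' := ⟨fun _ _ => by simp, fun _ _ => by simp⟩
  smul_mem' := by
    intro m f hf
    refine ⟨fun x y => ?_, fun a x => ?_⟩
    · simp only [Pi.smul_apply, smul_eq_mul_unop, hf.1 x y, add_mul]
    · simp only [Pi.smul_apply, smul_eq_mul_unop, hf.2 a x, mul_assoc]

/-- The canonical map from `E` to its double conjugate-semilinear dual,
`x ↦ (f ↦ star (f x))`. -/
def bid (E : Type*) [AddCommGroup E] [Module Aᵐᵒᵖ E] :
    E →ₗ[Aᵐᵒᵖ] ↥(sdual A ↥(sdual A E)) where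
  toFun x :=
    ⟨fun f => star ((f : E → A) x),
     ⟨fun f g => by simp, fun a f => by
        show star (((op a • f : ↥(sdual A E)) : E → A) x) = star a * star ((f : E → A) x)
        rw [Submodule.coe_smul, Pi.smul_apply, smul_eq_mul_unop, star_mul, unop_op]⟩⟩
  map_add' x y := by
    ext f
    simpa using (f.2.1 x y ▸ star_add _ _)
  map_smul' m x := by
    ext f
    show star ((f : E → A) (m • x)) = star ((f : E → A) x) * m.unop
    rw [show m • x = op m.unop • x by rw [op_unop], f.2.2 m.unop x, star_mul, star_star]

/-- The transpose of a linear map between right `A`-modules, acting on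
conjugate-semilinear duals by precomposition. -/
def transp {E F : Type*} [AddCommGroup E] [Module Aᵐᵒᵖ E] [AddCommGroup F] [Module Aᵐᵒᵖ F]
    (u : E →ₗ[Aᵐᵒᵖ] F) : ↥(sdual A F) →ₗ[Aᵐᵒᵖ] ↥(sdual A E) where
  toFun f :=
    ⟨fun x => (f : F → A) (u x),
     ⟨fun x y => by show (f : F → A) (u (x + y)) = _; rw [map_add, f.2.1],
      fun a x => by show (f : F → A) (u (op a • x)) = _; rw [map_smul, f.2.2]⟩⟩
  map_add' f g := by
    ext x
    show ((f + g : ↥(sdual A F)) : F → A) (u x) = ((f : F → A) (u x)) + ((g : F → A) (u x))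
    rw [Submodule.coe_add, Pi.add_apply]
  map_smul' m f := by
    ext x
    show ((m • f : ↥(sdual A F)) : F → A) (u x) = ((f : F → A) (u x)) * m.unop
    rw [Submodule.coe_smul, Pi.smul_apply, smul_eq_mul_unop]


variable {A} in
/-- Auxiliary: the conjugate-semilinear dual of a projective module separates points. -/
theorem sdual_sep {E : Type*} [AddCommGroup E] [Module Aᵐᵒᵖ E] [Module.Projective Aᵐᵒᵖ E]
    (x : E) (hx : ∀ f : ↥(sdual A E), (f : E → A) x = 0) : x = 0 := by
  obtain ⟨s, hs⟩ := Module.projective_def.mp (inferInstance : Module.Projective Aᵐᵒᵖ E)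
  by_contra hx0
  have hsx : s x ≠ 0 := fun h => hx0 (by simpa [h] using (hs x).symm)
  obtain ⟨a, ha⟩ := Finsupp.ne_iff.mp hsx
  set f : E → A := fun z => star (unop (s z a)) with hf
  have hmem : f ∈ sdual A E := by
    constructor
    · intro u v; simp [hf]
    · intro b z
      have : s (op b • z) a = op b * s z a := by
        rw [map_smul, Finsupp.smul_apply, smul_eq_mul]
      simp [hf, this, star_mul]
  have := hx ⟨f, hmem⟩
  simp only [hf] at this
  exact ha (by simpa using this)

theorem lift_nondegenerate_even_form_along_nilpotent_ideal
    (E : Type*) [AddCommGroup E] [Module Aᵐᵒᵖ E]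
    [Module.Finite Aᵐᵒᵖ E] [Module.Projective Aᵐᵒᵖ E]
    (I : Ideal Aᵐᵒᵖ)
    -- `I` is two-sided and stable under the involution
    (htwo : ∀ a ∈ I, ∀ b : Aᵐᵒᵖ, a * b ∈ I)
    (hstar : ∀ a ∈ I, op (star a.unop) ∈ I)
    -- `I` is nilpotent
    (hnil : IsNilpotent I)
    (ε : A) (hε : ε = 1 ∨ ε = -1)
    (ψ₀ ψ : E →ₗ[Aᵐᵒᵖ] ↥(sdual A E))
    -- `ψ = ψ₀ + ε ᵗψ₀` is the even hermitian form associated to the lift `ψ₀` of `φ₀`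
    (hψeven : ∀ x, ψ x = ψ₀ x + op ε • transp A ψ₀ (bid A E x))
    -- `ψ` maps `I·E` into `I·E*`, hence induces a map on the reductions mod `I`
    (hle : I • (⊤ : Submodule Aᵐᵒᵖ E) ≤
      (I • (⊤ : Submodule Aᵐᵒᵖ ↥(sdual A E))).comap ψ)
    -- the reduction of `ψ` mod `I` is the nondegenerate form `φ`
    (hred : Function.Bijective
      (Submodule.mapQ (I • (⊤ : Submodule Aᵐᵒᵖ E))
        (I • (⊤ : Submodule Aᵐᵒᵖ ↥(sdual A E))) ψ hle)) :
    Function.Bijective ψ := by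
  -- pointwise formula for the even form
  have hpt : ∀ x y : E, ((ψ x : E → A)) y =
      ((ψ₀ x : E → A)) y + star (((ψ₀ y : E → A)) x) * ε := by
    intro x y
    rw [hψeven x]
    rfl
  -- (anti-)symmetry of the even form
  have hsym : ∀ x y : E, star ((ψ y : E → A) x) = ((ψ x : E → A)) y * ε := by
    intro x y
    have hstar2 : star ε = ε := by rcases hε with rfl | rfl <;> simp
    have hsq : ∀ c : A, c * ε * ε = c := by rcases hε with rfl | rfl <;> intro c <;> simp
    have hcomm : ∀ c : A, ε * c = c * ε := by rcases hε with rfl | rfl <;> intro c <;> simp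
    rw [hpt y x, hpt x y, star_add, star_mul, star_star, hstar2, hcomm, add_mul, hsq]
    exact add_comm _ _
  -- surjectivity via nilpotency of I
  have hsup : LinearMap.range ψ ⊔ I • (⊤ : Submodule Aᵐᵒᵖ ↥(sdual A E)) = ⊤ := by
    rw [eq_top_iff]
    rintro z -
    obtain ⟨q, hq⟩ := hred.2 (Submodule.Quotient.mk z)
    obtain ⟨x, rfl⟩ := Submodule.Quotient.mk_surjective _ q
    rw [Submodule.mapQ_apply, Submodule.Quotient.eq] at hq
    have hz : z = ψ x - (ψ x - z) := by abel
    rw [hz]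
    exact Submodule.sub_mem _
      (Submodule.mem_sup_left (LinearMap.mem_range_self ψ x))
      (Submodule.mem_sup_right hq)
  have key : ∀ k : ℕ, (⊤ : Submodule Aᵐᵒᵖ ↥(sdual A E)) ≤
      LinearMap.range ψ ⊔ I ^ (k + 1) • ⊤ := by
    intro k
    induction k with
    | zero => rw [zero_add, Submodule.pow_one, hsup]
    | succ k ih =>
      refine ih.trans (sup_le le_sup_left ?_)
      have h1 : I ^ (k+1) • (⊤ : Submodule Aᵐᵒᵖ ↥(sdual A E)) =
          I ^ (k+1) • LinearMap.range ψ ⊔ I ^ (k+1+1) • ⊤ := by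
        conv_lhs => rw [← hsup]
        rw [Submodule.smul_sup, ← Submodule.smul_assoc, Ideal.smul_eq_mul, ← Submodule.pow_succ]
      rw [h1]
      exact sup_le (Submodule.smul_le_right.trans le_sup_left) le_sup_right
  have hsurj : Function.Surjective ψ := by
    obtain ⟨n, hn⟩ := hnil
    have h := key n
    have hn' : I ^ n = ⊥ := hn.trans (Ideal.zero_eq_bot)
    rw [Submodule.pow_succ, ← Ideal.smul_eq_mul, Submodule.smul_assoc, hn',
      Submodule.bot_smul, sup_bot_eq] at h
    rw [← LinearMap.range_eq_top]
    exact le_antisymm le_top h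
  refine ⟨?_, hsurj⟩
  have hker : ∀ x : E, ψ x = 0 → x = 0 := by
    intro x hx
    apply sdual_sep (A := A) x
    intro f
    obtain ⟨y, rfl⟩ := hsurj f
    have h := hsym x y
    rw [hx] at h
    have h0 : ((0 : ↥(sdual A E)) : E → A) y = 0 := rfl
    rw [h0, zero_mul] at h
    exact star_eq_zero.mp h
  intro a b hab
  have := hker (a - b) (by rw [map_sub, hab, sub_self])
  exact sub_eq_zero.mp this
end

section
/- Let A, B be rings with anti-involution and φ : A × B → C a ℤ-bilinear map satisfying φ(aa', bb') = φ(a,b)φ(a',b') and conj(φ(a,b)) = φ(ā, b̄). If (E, θ) is an ε-hermitian A-module (ᵗθ = εθ) and (F, ψ₀) an η-quadratic B-module, then θ ⊗ ψ₀ defines an (εη)-quadratic form on E ⊗ F; moreover if α is unitary for θ and β is orthogonal for ψ₀ (witnessed by γ), then (α ⊗ β, α ⊗ γ) is a morphism in the enlarged quadratic category, i.e. ᵗ(α⊗β) ∘ (θ⊗ψ₀) ∘ (α⊗β) = θ⊗ψ₀ + (θ⊗γ) − εη ᵗ(θ⊗γ). -/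
theorem cup_product_hermitian_quadratic
    (R S T : Type*) [Ring R] [Ring S] [Ring T]
    [StarRing R] [StarRing S] [StarRing T]
    (Φ : R → S → T)
    (hadd₁ : ∀ r r' s, Φ (r + r') s = Φ r s + Φ r' s)
    (hadd₂ : ∀ r s s', Φ r (s + s') = Φ r s + Φ r s')
    (hmul : ∀ r r' s s', Φ (r * r') (s * s') = Φ r s * Φ r' s')
    (hstar : ∀ r s, star (Φ r s) = Φ (star r) (star s))
    (ε η : ℤ) (hε : ε = 1 ∨ ε = -1) (hη : η = 1 ∨ η = -1)
    (θ α : R) (hθ : star θ = ε • θ)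
    (ψ₀ β γ : S)
    (hα : star α * θ * α = θ)
    (hβ : star β * ψ₀ * β = ψ₀ + γ - η • star γ) :
    star (Φ α β) * Φ θ ψ₀ * Φ α β
      = Φ θ ψ₀ + Φ θ γ - (ε * η) • star (Φ θ γ) := by
  -- Φ is additive in each variable
  have f : S →+ T := AddMonoidHom.mk' (Φ θ) (hadd₂ θ)
  have key : star (Φ α β) * Φ θ ψ₀ * Φ α β = Φ θ (ψ₀ + γ - η • star γ) := by
    rw [hstar, ← hmul, ← hmul, hα, hβ]
  rw [key]
  have hf : ∀ s s' : S, Φ θ (s - s') = Φ θ s - Φ θ s' :=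
    (AddMonoidHom.mk' (Φ θ) (hadd₂ θ)).map_sub
  have hz : ∀ (n : ℤ) (s : S), Φ θ (n • s) = n • Φ θ s :=
    fun n s => (AddMonoidHom.mk' (Φ θ) (hadd₂ θ)).map_zsmul n s
  have hz' : ∀ (n : ℤ) (s : S), Φ (n • θ) s = n • Φ θ s :=
    fun n s => (AddMonoidHom.mk' (fun r => Φ r s) (fun a b => hadd₁ a b s)).map_zsmul n θ
  have hsq : ε * ε = 1 := by rcases hε with h | h <;> simp [h]
  rw [hf, hadd₂, hz, hstar θ γ, hθ, hz', smul_smul]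
  rw [show ε * η * ε = η by rw [mul_comm, ← mul_assoc, hsq, one_mul]]
end

section
/- (Clauwens, nondegeneracy of the product form) Let E be a module identified with its dual via an isomorphism so that duality becomes adjunction, let θ(s) = Σ θₙ sⁿ ∈ End(E)[s] be such that H(s) := Σ θₙ sⁿ + Σ θₙ* (1−s)ⁿ is invertible in End(E)[s], and let φ be an endomorphism of a module F with φ + φ* = 1. Then κ := Σ θₙ ⊗ φⁿ ∈ End(E ⊗ F) satisfies κ + κ* = H evaluated at φ (i.e. Σ θₙ ⊗ φⁿ + Σ θₙ* ⊗ (1−φ)ⁿ), and in particular κ + κ* is invertible. -/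
/-!
STATEMENT 16 (Clauwens, nondegeneracy of the product form): identify the modules `E`, `F`
and `E ⊗ F` with their duals, so that transposition becomes the adjoint involution `star`
on the endomorphism rings `R = End(E)`, `S = End(F)`, `T = End(E ⊗ F)`, and the tensor
product of endomorphisms is a map `Φ : R → S → T`, additive in each variable,
multiplicative (`Φ(rr')(ss') = Φ r s · Φ r' s'`), unital, and star-compatible.
Let `θ(s) = Σ_{n<N} θₙ sⁿ ∈ R[s]` be such that
`H(s) = Σ θₙ sⁿ + Σ θₙ* (1−s)ⁿ` is invertible in `R[s]`, and let `φ ∈ S` with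
`φ + φ* = 1`.  Then `κ = Σ θₙ ⊗ φⁿ` satisfies
`κ + κ* = Σ θₙ ⊗ φⁿ + Σ θₙ* ⊗ (1−φ)ⁿ` (that is, `H` evaluated at `φ`), and in particular
`κ + κ*` is invertible.
-/

open Polynomial Finset

theorem clauwens_product_form_nondegenerate
    (R S T : Type*) [Ring R] [Ring S] [Ring T]
    [StarRing R] [StarRing S] [StarRing T]
    (Φ : R → S → T)
    (hadd₁ : ∀ r r' s, Φ (r + r') s = Φ r s + Φ r' s)
    (hadd₂ : ∀ r s s', Φ r (s + s') = Φ r s + Φ r s')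
    (hmul : ∀ r r' s s', Φ (r * r') (s * s') = Φ r s * Φ r' s')
    (hone : Φ 1 1 = 1)
    (hstar : ∀ r s, star (Φ r s) = Φ (star r) (star s))
    (N : ℕ) (θ : ℕ → R)
    -- `H(s) = Σ θₙ sⁿ + Σ θₙ* (1−s)ⁿ` is invertible in `R[s]`
    (hH : IsUnit ((∑ n ∈ range N, C (θ n) * X ^ n)
      + (∑ n ∈ range N, C (star (θ n)) * (1 - X) ^ n)))
    (φ : S) (hφ : φ + star φ = 1) :
    (∑ n ∈ range N, Φ (θ n) (φ ^ n)) + star (∑ n ∈ range N, Φ (θ n) (φ ^ n))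
        = (∑ n ∈ range N, Φ (θ n) (φ ^ n))
          + (∑ n ∈ range N, Φ (star (θ n)) ((1 - φ) ^ n)) ∧
    IsUnit ((∑ n ∈ range N, Φ (θ n) (φ ^ n)) + star (∑ n ∈ range N, Φ (θ n) (φ ^ n))) := by
  -- star φ = 1 - φ
  have hsφ : star φ = 1 - φ := by
    rw [eq_sub_iff_add_eq, add_comm]; exact hφ
  -- first part
  have hpart1 : star (∑ n ∈ range N, Φ (θ n) (φ ^ n))
      = ∑ n ∈ range N, Φ (star (θ n)) ((1 - φ) ^ n) := by
    rw [star_sum]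
    refine Finset.sum_congr rfl fun n _ => ?_
    rw [hstar, star_pow, hsφ]
  refine ⟨by rw [hpart1], ?_⟩
  rw [hpart1]
  -- build the ring hom ψ : R[X] →+* T
  have hmul₁ : ∀ r r' : R, Φ (r * r') 1 = Φ r 1 * Φ r' 1 := fun r r' => by
    simpa using hmul r r' 1 1
  let f : R →+* T :=
    { toFun := fun r => Φ r 1
      map_one' := hone
      map_mul' := hmul₁
      map_zero' := by
        have h := hadd₁ 0 0 1
        rw [add_zero] at h
        exact (left_eq_add.mp h)
      map_add' := fun r r' => hadd₁ r r' 1 }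
  have hf : ∀ r : R, f r = Φ r 1 := fun r => rfl
  have hcomm : ∀ r : R, Commute (f r) (Φ 1 φ) := fun r => by
    show f r * Φ 1 φ = Φ 1 φ * f r
    rw [hf]
    have h1 : Φ r 1 * Φ 1 φ = Φ r φ := by
      rw [← hmul]; simp
    have h2 : Φ 1 φ * Φ r 1 = Φ r φ := by
      rw [← hmul]; simp
    rw [h1, h2]
  set ψ : R[X] →+* T := eval₂RingHom' f (Φ 1 φ) hcomm with hψdef
  have hψC : ∀ r : R, ψ (C r) = Φ r 1 := fun r => by
    simp [hψdef, eval₂RingHom', hf]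
  have hψX : ψ X = Φ 1 φ := by
    simp [hψdef, eval₂RingHom']
  -- Φ 1 x ^ n = Φ 1 (x ^ n)
  have hpow : ∀ (x : S) (n : ℕ), (Φ 1 x) ^ n = Φ 1 (x ^ n) := by
    intro x n
    induction n with
    | zero => simpa using hone.symm
    | succ n ih =>
      rw [pow_succ, ih, ← hmul]; simp [pow_succ]
  have hmix : ∀ (r : R) (x : S), Φ r 1 * Φ 1 x = Φ r x := fun r x => by
    rw [← hmul]; simp
  -- ψ (C r * X ^ n) = Φ r (φ ^ n)
  have hψmon : ∀ (r : R) (n : ℕ), ψ (C r * X ^ n) = Φ r (φ ^ n) := fun r n => by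
    rw [map_mul, map_pow, hψC, hψX, hpow, hmix]
  -- ψ (1 - X) = Φ 1 (1 - φ)
  have hψ1X : ψ (1 - X) = Φ 1 (1 - φ) := by
    have hsub : Φ 1 1 - Φ 1 φ = Φ 1 (1 - φ) := by
      have h := hadd₂ 1 φ (1 - φ)
      rw [add_sub_cancel] at h
      rw [h, add_sub_cancel_left]
    rw [map_sub, map_one, hψX, ← hone, hsub]
  have hψmon' : ∀ (r : R) (n : ℕ), ψ (C r * (1 - X) ^ n) = Φ r ((1 - φ) ^ n) := fun r n => by
    rw [map_mul, map_pow, hψC, hψ1X, hpow, hmix]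
  -- apply ψ to hH
  have := hH.map ψ
  rw [map_add, map_sum, map_sum] at this
  simp only [hψmon, hψmon'] at this
  exact this
end

section
/- (Clauwens, independence of representative) With notation as above, if θ(s) is replaced by θ(s) + Z(s) − Z(s)* where Z(s) = Σ σₙ sⁿ and Z(s)* = Σ σₙ* (1−s)ⁿ, then the associated product form changes from κ = θ(φ) to κ' = κ + σ(φ) − (σ(φ))*, where σ(φ) = Σ σₙ ⊗ φⁿ; in particular κ and κ' define the same quadratic form class (they differ by an element of the form W − W*). -/
/-!
STATEMENT 17 (Clauwens, independence of the representative): in the same setting as the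
previous Clauwens lemma (modules identified with their duals, adjoint involution `star`,
tensor product of endomorphisms `Φ : R → S → T`, `φ ∈ S` with `φ + φ* = 1`, substitution
`s ↦ φ` sending `Σ aₙ sⁿ` to `Σ aₙ ⊗ φⁿ`), if `θ(s)` is replaced by
`θ(s) + Z(s) − Z(s)*` with `Z(s) = Σ σₙ sⁿ` and `Z(s)* = Σ σₙ* (1−s)ⁿ`, the product form
changes from `κ = θ(φ)` to `κ' = κ + σ(φ) − (σ(φ))*` where `σ(φ) = Σ σₙ ⊗ φⁿ`; in
particular `κ` and `κ'` differ by an element of the form `W − W*` and define the same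
quadratic form class.
-/

open Finset

theorem clauwens_product_form_well_defined
    (R S T : Type*) [Ring R] [Ring S] [Ring T]
    [StarRing R] [StarRing S] [StarRing T]
    (Φ : R → S → T)
    (hadd₁ : ∀ r r' s, Φ (r + r') s = Φ r s + Φ r' s)
    (hadd₂ : ∀ r s s', Φ r (s + s') = Φ r s + Φ r s')
    (hmul : ∀ r r' s s', Φ (r * r') (s * s') = Φ r s * Φ r' s')
    (hstar : ∀ r s, star (Φ r s) = Φ (star r) (star s))
    (N : ℕ) (θ σ : ℕ → R)
    (φ : S) (hφ : φ + star φ = 1) :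
    -- the adjoint of `W = σ(φ) = Σ σₙ ⊗ φⁿ` is `Σ σₙ* ⊗ (1−φ)ⁿ` ...
    star (∑ n ∈ range N, Φ (σ n) (φ ^ n))
        = ∑ n ∈ range N, Φ (star (σ n)) ((1 - φ) ^ n) ∧
    -- ... hence the product form associated to `θ + Z − Z*` is `κ + W − W*`
    ((∑ n ∈ range N, Φ (θ n) (φ ^ n)) + (∑ n ∈ range N, Φ (σ n) (φ ^ n))
        - (∑ n ∈ range N, Φ (star (σ n)) ((1 - φ) ^ n))
      = (∑ n ∈ range N, Φ (θ n) (φ ^ n)) + (∑ n ∈ range N, Φ (σ n) (φ ^ n))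
        - star (∑ n ∈ range N, Φ (σ n) (φ ^ n))) := by
  have h1 : star (∑ n ∈ range N, Φ (σ n) (φ ^ n))
      = ∑ n ∈ range N, Φ (star (σ n)) ((1 - φ) ^ n) := by
    rw [star_sum]
    refine Finset.sum_congr rfl fun n _ => ?_
    rw [hstar, star_pow]
    have : star φ = 1 - φ := by rw [← hφ]; abel
    rw [this]
  exact ⟨h1, by rw [h1]⟩
end
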